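/- Let u₀ be the unique minimizer of J over U and, for each K, let u_K be the unique minimizer of J_K over U. Then u_K → u₀ in the norm of U as K → ∞. -/

import Mathlib

open Filter

/-- If `u₀` is the (unique) minimizer of `J u = ‖T u - θ‖² + ρ‖u‖²` over `U` and,
for each `K`, `u_K` is the (unique) minimizer of `J_K u = ‖T_K u - θ‖² + ρ‖u‖²`,
where `‖T u - T_K u‖ ≤ η_K ‖u‖` with `η_K → 0`, then `u_K → u₀` in the norm of `U`. -/
theorem approx_minimizers_tendsto
    {U H : Type*} [NormedAddCommGroup U] [InnerProductSpace ℝ U] [CompleteSpace U]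
    [NormedAddCommGroup H] [InnerProductSpace ℝ H] [CompleteSpace H]
    (T : U →L[ℝ] H) (ρ : ℝ) (hρ : 0 < ρ) (θ : H)
    (TK : ℕ → (U →L[ℝ] H)) (η : ℕ → ℝ)
    (hη : Tendsto η atTop (nhds 0))
    (hbound : ∀ K : ℕ, ∀ u : U, ‖T u - TK K u‖ ≤ η K * ‖u‖)
    (u₀ : U)
    (hu₀ : ∀ u : U, ‖T u₀ - θ‖ ^ 2 + ρ * ‖u₀‖ ^ 2 ≤ ‖T u - θ‖ ^ 2 + ρ * ‖u‖ ^ 2)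
    (uK : ℕ → U)
    (huK : ∀ K : ℕ, ∀ u : U,
      ‖TK K (uK K) - θ‖ ^ 2 + ρ * ‖uK K‖ ^ 2 ≤ ‖TK K u - θ‖ ^ 2 + ρ * ‖u‖ ^ 2) :
    Tendsto uK atTop (nhds u₀) := by
  rcases subsingleton_or_nontrivial U with hU | hU
  · have h : uK = fun _ => u₀ := funext fun K => Subsingleton.elim _ _
    rw [h]; exact tendsto_const_nhds
  obtain ⟨w, hw⟩ := exists_ne (0 : U)
  have hwpos : 0 < ‖w‖ := norm_pos_iff.mpr hw
  have hη0 : ∀ K, 0 ≤ η K := by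
    intro K
    have h1 := hbound K w
    have h2 : (0:ℝ) ≤ ‖T w - TK K w‖ := norm_nonneg _
    nlinarith
  set M : ℝ := Real.sqrt (‖θ‖ ^ 2 / ρ) with hMdef
  have hM0 : 0 ≤ M := Real.sqrt_nonneg _
  -- a priori bounds
  have hbnd : ∀ K, ‖uK K‖ ≤ M ∧ ‖TK K (uK K) - θ‖ ≤ ‖θ‖ := by
    intro K
    have h := huK K 0
    simp only [map_zero, zero_sub, norm_neg, norm_zero] at h
    constructor
    · have h1 : ‖uK K‖ ^ 2 ≤ ‖θ‖ ^ 2 / ρ := by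
        rw [le_div_iff₀ hρ]
        nlinarith [sq_nonneg ‖TK K (uK K) - θ‖]
      calc ‖uK K‖ = Real.sqrt (‖uK K‖ ^ 2) := (Real.sqrt_sq (norm_nonneg _)).symm
        _ ≤ M := Real.sqrt_le_sqrt h1
    · have h1 : ‖TK K (uK K) - θ‖ ^ 2 ≤ ‖θ‖ ^ 2 := by nlinarith [sq_nonneg ‖uK K‖]
      calc ‖TK K (uK K) - θ‖ = Real.sqrt (‖TK K (uK K) - θ‖ ^ 2) :=
            (Real.sqrt_sq (norm_nonneg _)).symm
        _ ≤ Real.sqrt (‖θ‖ ^ 2) := Real.sqrt_le_sqrt h1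
        _ = ‖θ‖ := Real.sqrt_sq (norm_nonneg _)
  set ε : ℕ → ℝ := fun K =>
    η K * ‖u₀‖ * (2 * ‖T u₀ - θ‖ + η K * ‖u₀‖) + η K * M * (2 * ‖θ‖ + η K * M) with hεdef
  have key : ∀ K, ρ * ‖uK K - u₀‖ ^ 2 ≤ 2 * ε K := by
    intro K
    obtain ⟨hMK, hTKb⟩ := hbnd K
    set v := uK K with hv
    -- J v ≤ J u₀ + ε K
    have hTv : ‖T v - θ‖ ≤ ‖TK K v - θ‖ + η K * ‖v‖ := by
      have heq : T v - θ = (TK K v - θ) + (T v - TK K v) := by abel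
      calc ‖T v - θ‖ = ‖(TK K v - θ) + (T v - TK K v)‖ := by rw [← heq]
        _ ≤ ‖TK K v - θ‖ + ‖T v - TK K v‖ := norm_add_le _ _
        _ ≤ _ := by linarith [hbound K v]
    have hTu₀ : ‖TK K u₀ - θ‖ ≤ ‖T u₀ - θ‖ + η K * ‖u₀‖ := by
      have heq : TK K u₀ - θ = (T u₀ - θ) + (TK K u₀ - T u₀) := by abel
      have hrev : ‖TK K u₀ - T u₀‖ = ‖T u₀ - TK K u₀‖ := norm_sub_rev _ _
      calc ‖TK K u₀ - θ‖ = ‖(T u₀ - θ) + (TK K u₀ - T u₀)‖ := by rw [← heq]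
        _ ≤ ‖T u₀ - θ‖ + ‖TK K u₀ - T u₀‖ := norm_add_le _ _
        _ ≤ _ := by rw [hrev]; linarith [hbound K u₀]
    have s1 : ‖T v - θ‖ ^ 2 ≤
        ‖TK K v - θ‖ ^ 2 + 2 * ‖TK K v - θ‖ * (η K * ‖v‖) + (η K * ‖v‖) ^ 2 := by
      nlinarith [hTv, norm_nonneg (T v - θ), norm_nonneg (TK K v - θ)]
    have s2 : ‖TK K u₀ - θ‖ ^ 2 ≤
        ‖T u₀ - θ‖ ^ 2 + 2 * ‖T u₀ - θ‖ * (η K * ‖u₀‖) + (η K * ‖u₀‖) ^ 2 := by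
      nlinarith [hTu₀, norm_nonneg (TK K u₀ - θ), norm_nonneg (T u₀ - θ)]
    have hmv : η K * ‖v‖ ≤ η K * M := mul_le_mul_of_nonneg_left hMK (hη0 K)
    have t1 : ‖TK K v - θ‖ * (η K * ‖v‖) ≤ ‖θ‖ * (η K * M) := by
      apply mul_le_mul hTKb hmv (mul_nonneg (hη0 K) (norm_nonneg _)) (norm_nonneg θ)
    have t2 : (η K * ‖v‖) ^ 2 ≤ (η K * M) ^ 2 := by
      apply pow_le_pow_left₀ (mul_nonneg (hη0 K) (norm_nonneg _)) hmv
    have h1 := huK K u₀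
    have c1 : ‖T v - θ‖ ^ 2 + ρ * ‖v‖ ^ 2 ≤ ‖T u₀ - θ‖ ^ 2 + ρ * ‖u₀‖ ^ 2 + ε K := by
      simp only [hεdef]
      nlinarith [s1, s2, t1, t2, h1]
    -- strong convexity
    set x := T v - θ with hx
    set y := T u₀ - θ with hy
    have hm := hu₀ ((2:ℝ)⁻¹ • (v + u₀))
    have hTm : T ((2:ℝ)⁻¹ • (v + u₀)) - θ = (2:ℝ)⁻¹ • (x + y) := by
      show T ((2:ℝ)⁻¹ • (v + u₀)) - θ = (2:ℝ)⁻¹ • ((T v - θ) + (T u₀ - θ))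
      rw [map_smul, map_add]
      module
    have hnsq : ∀ z : H, ‖(2:ℝ)⁻¹ • z‖ ^ 2 = ‖z‖ ^ 2 / 4 := by
      intro z
      rw [norm_smul, Real.norm_eq_abs, mul_pow]
      norm_num
      ring
    have hnsqU : ‖(2:ℝ)⁻¹ • (v + u₀)‖ ^ 2 = ‖v + u₀‖ ^ 2 / 4 := by
      rw [norm_smul, Real.norm_eq_abs, mul_pow]
      norm_num
      ring
    rw [hTm, hnsq, hnsqU] at hm
    have parH : ∀ a b : H, ‖a + b‖ ^ 2 + ‖a - b‖ ^ 2 = 2 * ‖a‖ ^ 2 + 2 * ‖b‖ ^ 2 := by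
      intro a b
      rw [norm_add_sq_real, norm_sub_sq_real]; ring
    have parU : ∀ a b : U, ‖a + b‖ ^ 2 + ‖a - b‖ ^ 2 = 2 * ‖a‖ ^ 2 + 2 * ‖b‖ ^ 2 := by
      intro a b
      rw [norm_add_sq_real, norm_sub_sq_real]; ring
    have p1 := parH x y
    have p2 := parU v u₀
    have p2' : ρ * ‖v + u₀‖ ^ 2 + ρ * ‖v - u₀‖ ^ 2 = 2 * ρ * ‖v‖ ^ 2 + 2 * ρ * ‖u₀‖ ^ 2 := by
      linear_combination ρ * p2
    have hxy : (0:ℝ) ≤ ‖x - y‖ ^ 2 := sq_nonneg _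
    have c2 : ρ * ‖v - u₀‖ ^ 2 ≤
        2 * (‖x‖ ^ 2 + ρ * ‖v‖ ^ 2 - ‖y‖ ^ 2 - ρ * ‖u₀‖ ^ 2) := by
      linarith [hm, p1, p2', hxy]
    simp only [hx, hy] at c2
    linarith
  have hε : Tendsto ε atTop (nhds 0) := by
    have hc1 : Tendsto (fun K => η K * ‖u₀‖) atTop (nhds 0) := by
      simpa using hη.mul (tendsto_const_nhds (x := ‖u₀‖))
    have hc2 : Tendsto (fun K => η K * M) atTop (nhds 0) := by
      simpa using hη.mul (tendsto_const_nhds (x := M))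
    have h := (hc1.mul ((tendsto_const_nhds (x := 2 * ‖T u₀ - θ‖)).add hc1)).add
      (hc2.mul ((tendsto_const_nhds (x := 2 * ‖θ‖)).add hc2))
    simpa using h
  have hb : ∀ K, ‖uK K - u₀‖ ≤ Real.sqrt (2 * ε K / ρ) := by
    intro K
    have h := key K
    have h2 : ‖uK K - u₀‖ ^ 2 ≤ 2 * ε K / ρ := by
      rw [le_div_iff₀ hρ]; nlinarith
    calc ‖uK K - u₀‖ = Real.sqrt (‖uK K - u₀‖ ^ 2) := (Real.sqrt_sq (norm_nonneg _)).symm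
      _ ≤ _ := Real.sqrt_le_sqrt h2
  have hsq : Tendsto (fun K => Real.sqrt (2 * ε K / ρ)) atTop (nhds 0) := by
    have h1 : Tendsto (fun K => 2 * ε K / ρ) atTop (nhds 0) := by
      simpa using ((tendsto_const_nhds (x := (2:ℝ))).mul hε).div_const ρ
    have h := (Real.continuous_sqrt.tendsto 0).comp h1
    simpa [Function.comp_def] using h
  exact tendsto_iff_norm_sub_tendsto_zero.mpr
    (squeeze_zero (fun K => norm_nonneg _) hb hsq)
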